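/- arXiv:2605.12996 — 2 statements merged into one kernel-verified Lean document; each statement's English description precedes it below -/
import Mathlib

section
/- Let H : ℝ^n × ℝ^n → ℝ be continuously differentiable in its first variable, bounded below by a constant m := inf H > -∞, and satisfy |D_x H(x,p)| ≤ γ₁ (1 + |H(x,p)|) for all (x,p), where γ₁ > 0. Set γ₂ := 1 + 2|m|. Then for all x, y, p: H(y,p) ≤ e^{γ₁|x-y|} H(x,p) + γ₂ (e^{γ₁|x-y|} - 1). -/
theorem stmt_7 (n : ℕ)
    (H : EuclideanSpace ℝ (Fin n) → EuclideanSpace ℝ (Fin n) → ℝ)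
    (γ₁ m : ℝ) (hγ₁ : 0 < γ₁)
    (hdiff : ∀ p, Differentiable ℝ (fun x => H x p))
    (hcont : ∀ p, Continuous (fun x => fderiv ℝ (fun x' => H x' p) x))
    (hbound : ∀ x p, m ≤ H x p)
    (hDx : ∀ x p, ‖fderiv ℝ (fun x' => H x' p) x‖ ≤ γ₁ * (1 + |H x p|)) :
    ∀ x y p, H y p ≤ Real.exp (γ₁ * ‖x - y‖) * H x p +
      (1 + 2 * |m|) * (Real.exp (γ₁ * ‖x - y‖) - 1) := by
  intro x y p
  set K := γ₁ * ‖y - x‖ with hK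
  have hKxy : ‖x - y‖ = ‖y - x‖ := norm_sub_rev x y
  set c : ℝ → EuclideanSpace ℝ (Fin n) := fun τ => x + τ • (y - x) with hc
  set g : ℝ → ℝ := fun τ => H (c τ) p + (1 + 2 * |m|) with hg
  have habs : ∀ z : EuclideanSpace ℝ (Fin n), |H z p| ≤ H z p + 2 * |m| := by
    intro z
    rcases abs_cases (H z p) with ⟨h1, h2⟩ | ⟨h1, h2⟩
    · linarith [abs_nonneg m]
    · have hm : -|m| ≤ H z p := le_trans (neg_abs_le m) (hbound z p)
      linarith
  have hcderiv : ∀ τ : ℝ, HasDerivAt c (y - x) τ := by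
    intro τ
    exact (((hasDerivAt_id τ).smul_const (y - x)).const_add x).congr_deriv (one_smul ℝ _)
  have hgderiv : ∀ τ : ℝ,
      HasDerivAt g ((fderiv ℝ (fun x' => H x' p) (c τ)) (y - x)) τ := by
    intro τ
    have h1 : HasFDerivAt (fun x' => H x' p)
        (fderiv ℝ (fun x' => H x' p) (c τ)) (c τ) := ((hdiff p) (c τ)).hasFDerivAt
    exact (h1.comp_hasDerivAt τ (hcderiv τ)).add_const _
  have hgpos : ∀ τ, 0 < g τ := by
    intro τ
    have h1 := hbound (c τ) p
    have h2 := neg_abs_le m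
    simp only [hg]
    nlinarith [abs_nonneg m]
  have hKnn : 0 ≤ K := mul_nonneg hγ₁.le (norm_nonneg _)
  have key := norm_le_gronwallBound_of_norm_deriv_right_le
    (f := g) (f' := fun τ => (fderiv ℝ (fun x' => H x' p) (c τ)) (y - x))
    (a := (0:ℝ)) (b := 1) (δ := g 0) (K := K) (ε := 0)
    (fun τ _ => (hgderiv τ).continuousAt.continuousWithinAt)
    (fun τ _ => (hgderiv τ).hasDerivWithinAt)
    (le_of_eq (Real.norm_of_nonneg (hgpos 0).le))
    ?_ 1 (by norm_num)
  · rw [gronwallBound_ε0] at key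
    have hg1 : g 1 ≤ g 0 * Real.exp (K * (1 - 0)) := by
      calc g 1 ≤ ‖g 1‖ := le_abs_self _
        _ ≤ _ := key
    have hc0 : c 0 = x := by simp [hc]
    have hc1 : c 1 = y := by simp [hc]
    have hE : Real.exp (K * (1 - 0)) = Real.exp (γ₁ * ‖x - y‖) := by
      rw [hKxy]; ring_nf; rw [hK]
    rw [hE] at hg1
    simp only [hg, hc0, hc1] at hg1
    linarith
  · intro τ _
    have h1 : ‖(fderiv ℝ (fun x' => H x' p) (c τ)) (y - x)‖ ≤
        ‖fderiv ℝ (fun x' => H x' p) (c τ)‖ * ‖y - x‖ :=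
      (fderiv ℝ (fun x' => H x' p) (c τ)).le_opNorm _
    have h2 := hDx (c τ) p
    have h3 := habs (c τ)
    have h4 : ‖g τ‖ = g τ := Real.norm_of_nonneg (hgpos τ).le
    rw [h4]
    have h5 : γ₁ * (1 + |H (c τ) p|) * ‖y - x‖ ≤ K * g τ := by
      simp only [hg, hK]
      nlinarith [norm_nonneg (y - x)]
    calc ‖(fderiv ℝ (fun x' => H x' p) (c τ)) (y - x)‖
        ≤ γ₁ * (1 + |H (c τ) p|) * ‖y - x‖ := by
          refine h1.trans ?_
          exact mul_le_mul_of_nonneg_right h2 (norm_nonneg _)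
      _ ≤ K * g τ := h5
      _ ≤ K * g τ + 0 := by linarith
end

section
/- Let f : ℝ → ℝ be continuously differentiable with f(0) = 0 and f'(s) ≥ d₀ > 0 for all |s| ≤ R, and suppose |f'(s) - f'(0)| ≤ K|s| for |s| ≤ R. Fix a bounded function û : X → ℝ with ‖û‖_∞ ≤ R₀ and set M := K ‖û‖_∞² / (2 d₀). Then for all λ > 0 with λ ≤ 1, Mλ ≤ 1, and λ‖û‖_∞ + Mλ² ≤ R: f(λ û(x) + M λ²) - λ f'(0) û(x) ≥ 0 for every x ∈ X. -/
set_option maxHeartbeats 1000000 in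
theorem stmt_18 {X : Type*} (f : ℝ → ℝ) (d₀ K R R₀ : ℝ)
    (hf : ContDiff ℝ 1 f) (hf0 : f 0 = 0) (hd₀ : 0 < d₀) (hK : 0 ≤ K)
    (hlow : ∀ s : ℝ, |s| ≤ R → d₀ ≤ deriv f s)
    (hlip : ∀ s : ℝ, |s| ≤ R → |deriv f s - deriv f 0| ≤ K * |s|)
    (uhat : X → ℝ) (huhat : ∀ x, |uhat x| ≤ R₀)
    (M : ℝ) (hM : M = K * R₀ ^ 2 / (2 * d₀))
    (lam : ℝ) (hlam : 0 < lam) (hlam1 : lam ≤ 1) (hMlam : M * lam ≤ 1)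
    (hrange : lam * R₀ + M * lam ^ 2 ≤ R) :
    ∀ x, 0 ≤ f (lam * uhat x + M * lam ^ 2) - lam * deriv f 0 * uhat x := by
  intro x
  have hdf : Differentiable ℝ f := hf.differentiable one_ne_zero
  have hR₀ : 0 ≤ R₀ := (abs_nonneg _).trans (huhat x)
  have hM0 : 0 ≤ M := by
    rw [hM]; positivity
  set u := uhat x with hu
  set a := lam * u with ha
  set b := a + M * lam ^ 2 with hb
  have hMl2 : 0 ≤ M * lam ^ 2 := by positivity
  have hab : a ≤ b := by simp [hb, hMl2]
  have haabs : |a| ≤ lam * R₀ := by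
    rw [ha, abs_mul, abs_of_pos hlam]
    exact mul_le_mul_of_nonneg_left (huhat x) hlam.le
  have haR : |a| ≤ R := haabs.trans (le_trans (le_add_of_nonneg_right hMl2) hrange)
  have hbR : |b| ≤ R := by
    rw [hb]
    calc |a + M * lam ^ 2| ≤ |a| + |M * lam ^ 2| := abs_add_le _ _
    _ ≤ lam * R₀ + M * lam ^ 2 := by
        rw [abs_of_nonneg hMl2]; exact add_le_add_left haabs _
    _ ≤ R := hrange
  have hmemR : ∀ s : ℝ, s ∈ Set.Icc a b → |s| ≤ R := by
    intro s ⟨h1, h2⟩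
    rw [abs_le]; rw [abs_le] at haR hbR
    exact ⟨haR.1.trans h1, h2.trans hbR.2⟩
  -- Step 1: f b - f a ≥ d₀ * (M * lam ^ 2)
  have step1 : d₀ * (M * lam ^ 2) ≤ f b - f a := by
    set g : ℝ → ℝ := fun s => f s - d₀ * s with hg
    have hdg : ∀ s : ℝ, HasDerivAt g (deriv f s - d₀) s := by
      intro s
      have h2 : HasDerivAt (fun s : ℝ => d₀ * s) d₀ s := by
        simpa using (hasDerivAt_id s).const_mul d₀
      exact (hdf s).hasDerivAt.sub h2
    have hmono : MonotoneOn g (Set.Icc a b) := by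
      apply monotoneOn_of_deriv_nonneg (convex_Icc a b)
      · exact fun s _ => ((hdg s).continuousAt).continuousWithinAt
      · intro s hs
        exact ((hdg s).differentiableAt).differentiableWithinAt
      · intro s hs
        rw [interior_Icc] at hs
        rw [(hdg s).deriv]
        have := hlow s (hmemR s (Set.mem_Icc_of_Ioo hs))
        linarith
    have := hmono (Set.left_mem_Icc.mpr hab) (Set.right_mem_Icc.mpr hab) hab
    simp only [hg] at this
    have hba : b - a = M * lam ^ 2 := by rw [hb]; ring
    nlinarith [this]
  -- Step 2: f a - deriv f 0 * a ≥ -(K/2) * a^2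
  have step2 : -(K / 2 * a ^ 2) ≤ f a - deriv f 0 * a := by
    set φ : ℝ → ℝ := fun s => f s - deriv f 0 * s + K / 2 * s ^ 2 with hφ
    have hdφ : ∀ s : ℝ, HasDerivAt φ (deriv f s - deriv f 0 + K * s) s := by
      intro s
      have h2 : HasDerivAt (fun s : ℝ => deriv f 0 * s) (deriv f 0) s := by
        simpa using (hasDerivAt_id s).const_mul (deriv f 0)
      have h3 : HasDerivAt (fun s : ℝ => K / 2 * s ^ 2) (K * s) s := by
        have := (hasDerivAt_pow 2 s).const_mul (K / 2)
        exact this.congr_deriv (by push_cast; ring)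
      exact ((hdf s).hasDerivAt.sub h2).add h3
    have hφ0 : φ 0 = 0 := by simp [hφ, hf0]
    have hφa : 0 ≤ φ a := by
      rcases le_or_gt 0 a with h0a | h0a
      · have hmono : MonotoneOn φ (Set.Icc 0 a) := by
          apply monotoneOn_of_deriv_nonneg (convex_Icc 0 a)
          · exact fun s _ => ((hdφ s).continuousAt).continuousWithinAt
          · exact fun s _ => ((hdφ s).differentiableAt).differentiableWithinAt
          · intro s hs
            rw [interior_Icc] at hs
            rw [(hdφ s).deriv]
            have hsR : |s| ≤ R := by
              rw [abs_le]; rw [abs_le] at haR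
              constructor <;> nlinarith [hs.1, hs.2, haR.1, haR.2]
            have := hlip s hsR
            rw [abs_le] at this
            rw [abs_of_nonneg hs.1.le] at this
            linarith [this.1]
        have := hmono (Set.left_mem_Icc.mpr h0a) (Set.right_mem_Icc.mpr h0a) h0a
        rw [hφ0] at this; exact this
      · have hanti : AntitoneOn φ (Set.Icc a 0) := by
          apply antitoneOn_of_deriv_nonpos (convex_Icc a 0)
          · exact fun s _ => ((hdφ s).continuousAt).continuousWithinAt
          · exact fun s _ => ((hdφ s).differentiableAt).differentiableWithinAt
          · intro s hs
            rw [interior_Icc] at hs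
            rw [(hdφ s).deriv]
            have hsR : |s| ≤ R := by
              rw [abs_le]; rw [abs_le] at haR
              constructor <;> nlinarith [hs.1, hs.2, haR.1, haR.2]
            have := hlip s hsR
            rw [abs_le] at this
            rw [abs_of_nonpos hs.2.le] at this
            linarith [this.2]
        have := hanti (Set.left_mem_Icc.mpr h0a.le) (Set.right_mem_Icc.mpr h0a.le) h0a.le
        rw [hφ0] at this; exact this
    simp only [hφ] at hφa
    linarith
  -- combine
  have ha2 : a ^ 2 ≤ lam ^ 2 * R₀ ^ 2 := by
    have := sq_le_sq' (neg_le_of_abs_le haabs) (le_of_abs_le haabs)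
    nlinarith [this]
  have hdM : d₀ * M = K * R₀ ^ 2 / 2 := by
    rw [hM, mul_div_assoc', mul_comm 2 d₀, mul_div_mul_left _ _ hd₀.ne']
  have : lam * deriv f 0 * u = deriv f 0 * a := by rw [ha]; ring
  rw [this]
  have e1 : d₀ * (M * lam ^ 2) = K * R₀ ^ 2 / 2 * lam ^ 2 := by
    rw [← mul_assoc, hdM]
  have e2 : K / 2 * a ^ 2 ≤ K / 2 * (lam ^ 2 * R₀ ^ 2) :=
    mul_le_mul_of_nonneg_left ha2 (by positivity)
  linarith
end
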